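/- Let Φ = (A; {E_i}_{i=0}^d; A*; {E*_i}_{i=0}^d) be a Leonard system on V, with ν, ρ*, A_i = ν ρ*(E*_i), and k_i = ν tr(E*_i E_0) as in the context. Then A_i E_0 = k_i E_0 for 0 ≤ i ≤ d. -/

import Mathlib

noncomputable section

open Finset

variable {F V : Type*} [Field F] [AddCommGroup V] [Module F V]

/-- A matrix is irreducible tridiagonal: each nonzero entry lies on the diagonal,
subdiagonal or superdiagonal, and every subdiagonal and superdiagonal entry is nonzero. -/
def IsIrredTridiag {n : ℕ} {F : Type*} [Field F] (M : Matrix (Fin n) (Fin n) F) : Prop :=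
  (∀ i j : Fin n, ((i : ℕ) + 1 < (j : ℕ) ∨ (j : ℕ) + 1 < (i : ℕ)) → M i j = 0) ∧
  (∀ i j : Fin n, ((i : ℕ) + 1 = (j : ℕ) ∨ (j : ℕ) + 1 = (i : ℕ)) → M i j ≠ 0)

/-- A Leonard pair on `V` (of dimension `d+1`): there is a basis in which `A` is
irreducible tridiagonal and `A*` diagonal, and a basis in which `A*` is irreducible
tridiagonal and `A` diagonal. -/
def IsLeonardPair (d : ℕ) (A Astar : Module.End F V) : Prop :=
  (∃ b : Module.Basis (Fin (d + 1)) F V,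
    IsIrredTridiag (LinearMap.toMatrix b b A) ∧ (LinearMap.toMatrix b b Astar).IsDiag) ∧
  (∃ b : Module.Basis (Fin (d + 1)) F V,
    IsIrredTridiag (LinearMap.toMatrix b b Astar) ∧ (LinearMap.toMatrix b b A).IsDiag)

/-- A Boltzmann pair for the Leonard pair `A, A*` : invertible `W ∈ ⟨A⟩`,
`W* ∈ ⟨A*⟩` with `W A* W⁻¹ = (W*)⁻¹ A W*`. -/
def IsBoltzmannPair (A Astar W Wstar : Module.End F V) : Prop :=
  W ∈ Algebra.adjoin F {A} ∧ Wstar ∈ Algebra.adjoin F {Astar} ∧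
  IsUnit W ∧ IsUnit Wstar ∧
  W * Astar * Ring.inverse W = Ring.inverse Wstar * A * Wstar

/-- `E` is an ordering of the primitive idempotents of the multiplicity-free map `B`. -/
def IsIdemOrdering (d : ℕ) (B : Module.End F V) (E : Fin (d + 1) → Module.End F V) : Prop :=
  (∀ i, E i ≠ 0) ∧ (∀ i j, E i * E j = if i = j then E i else 0) ∧
  (∑ i, E i = 1) ∧ ∃ θ : Fin (d + 1) → F, Function.Injective θ ∧ B = ∑ i, θ i • E i

/-- `E` is a standard ordering of the primitive idempotents of `B` (relative to `C`):
choosing nonzero `vᵢ ∈ Eᵢ V`, the matrix of `C` in the basis `vᵢ` is irreducible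
tridiagonal (and the matrix of `B` is diagonal). -/
def IsStandardOrdering (d : ℕ) (B C : Module.End F V)
    (E : Fin (d + 1) → Module.End F V) : Prop :=
  IsIdemOrdering d B E ∧
  ∃ b : Module.Basis (Fin (d + 1)) F V, (∀ i, E i (b i) = b i) ∧
    IsIrredTridiag (LinearMap.toMatrix b b C) ∧ (LinearMap.toMatrix b b B).IsDiag

/-- A Leonard system on `V`. -/
def IsLeonardSystem (d : ℕ) (A Astar : Module.End F V)
    (E Estar : Fin (d + 1) → Module.End F V) : Prop :=
  IsLeonardPair d A Astar ∧ IsStandardOrdering d A Astar E ∧ IsStandardOrdering d Astar A Estar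

/-- `Aᵢ E₀ = kᵢ E₀` for `0 ≤ i ≤ d`, where `Aᵢ = ν ρ*(E*ᵢ)` and
`kᵢ = ν tr(E*ᵢ E₀)`. -/
theorem Ai_E0_eq_ki_E0 {F V : Type*} [Field F] [AddCommGroup V] [Module F V]
    (d : ℕ) (A Astar : Module.End F V) (E Estar : Fin (d + 1) → Module.End F V)
    (hLS : IsLeonardSystem d A Astar E Estar)
    (ν : F) (hν0 : ν ≠ 0)
    (hν1 : ν • (E 0 * Estar 0 * E 0) = E 0)
    (hν2 : ν • (Estar 0 * E 0 * Estar 0) = Estar 0)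
    (Ai : Fin (d + 1) → Module.End F V)
    (hAi : ∀ i, Ai i ∈ Algebra.adjoin F {A} ∧
      Ai i * Estar 0 = ν • (Estar i * E 0 * Estar 0))
    (k : Fin (d + 1) → F)
    (hk : ∀ i, k i = ν * LinearMap.trace F V (Estar i * E 0)) :
    ∀ i, Ai i * E 0 = k i • E 0 := by
  intro i
  obtain ⟨-, hstdE, -⟩ := hLS
  obtain ⟨⟨hne, horth, hsum, θ, hθinj, hA⟩, b, hEb, -⟩ := hstdE
  -- action of the idempotents on the basis b
  have hEbl : ∀ j l : Fin (d + 1), E j (b l) = if l = j then b j else 0 := by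
    intro j l
    by_cases h : l = j
    · subst h; simp [hEb]
    · have h0 : (E j * E l) (b l) = (0 : Module.End F V) (b l) := by
        rw [horth j l, if_neg (fun hjl => h hjl.symm)]
      simpa [Module.End.mul_apply, hEb, h] using h0
  -- A commutes with E 0
  have hAE : Commute A (E 0) := by
    have h1 : A * E 0 = θ 0 • E 0 := by
      rw [hA, Finset.sum_mul]
      simp only [smul_mul_assoc, horth]
      simp
    have h2 : E 0 * A = θ 0 • E 0 := by
      rw [hA, Finset.mul_sum]
      have : ∀ j, E 0 * θ j • E j = θ j • (E 0 * E j) := fun j => (mul_smul_comm _ _ _)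
      simp only [this, horth]
      simp [eq_comm (a := (0 : Fin (d+1)))]
    rw [Commute, SemiconjBy, h1, h2]
  have hcomm : Commute (Ai i) (E 0) :=
    (Algebra.commute_of_mem_adjoin_singleton_of_commute (hAi i).1 hAE.symm).symm
  -- key algebraic identity
  have e1 : Ai i * E 0 = ν • (Ai i * (E 0 * (Estar 0 * E 0))) := by
    conv_lhs => rw [← hν1]
    simp only [mul_smul_comm, mul_assoc]
  have e2 : Ai i * (E 0 * (Estar 0 * E 0)) = E 0 * (Ai i * Estar 0) * E 0 := by
    rw [← mul_assoc, hcomm.eq]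
    simp only [mul_assoc]
  have e3 : E 0 * (Ai i * Estar 0) * E 0 = E 0 * Estar i * E 0 := by
    rw [(hAi i).2]
    calc E 0 * (ν • (Estar i * E 0 * Estar 0)) * E 0
        = E 0 * Estar i * (ν • (E 0 * Estar 0 * E 0)) := by
          simp only [mul_smul_comm, smul_mul_assoc, mul_assoc]
      _ = E 0 * Estar i * E 0 := by rw [hν1]
  have key : Ai i * E 0 = ν • (E 0 * Estar i * E 0) := by rw [e1, e2, e3]
  -- identify E 0 * Estar i * E 0 with a scalar times E 0
  set c : F := b.repr (Estar i (b 0)) 0 with hc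
  have h1 : E 0 * Estar i * E 0 = c • E 0 := by
    refine b.ext fun l => ?_
    by_cases hl : l = 0
    · subst hl
      simp only [Module.End.mul_apply, LinearMap.smul_apply]
      rw [hEbl 0 0, if_pos rfl]
      conv_lhs => rw [← b.sum_repr (Estar i (b 0))]
      rw [map_sum]
      simp only [map_smul, hEbl]
      rw [Finset.sum_congr rfl (fun m _ => by rw [smul_ite, smul_zero]),
        Finset.sum_ite_eq' Finset.univ (0 : Fin (d + 1))]
      simp [hc]
    · simp [Module.End.mul_apply, hEbl, hl]
  have h2 : LinearMap.trace F V (Estar i * E 0) = c := by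
    rw [LinearMap.trace_eq_matrix_trace F b, Matrix.trace]
    have hdiag : ∀ l, (LinearMap.toMatrix b b (Estar i * E 0)).diag l
        = if l = 0 then c else 0 := by
      intro l
      rw [Matrix.diag_apply, LinearMap.toMatrix_apply, Module.End.mul_apply, hEbl]
      by_cases hl : l = 0
      · subst hl; simp [hc]
      · simp [hl]
    rw [Finset.sum_congr rfl (fun l _ => hdiag l), Finset.sum_ite_eq' Finset.univ (0 : Fin (d+1))]
    simp
  rw [key, h1, hk, h2, smul_smul]
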